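/- (Lower bound on RLL redundancy.) Let Q > R ≥ 1, ℓ ≥ 1, and n ≥ 2ℓ be integers, Σ a finite alphabet with |Σ| = Q, and Σ' ⊆ Σ with |Σ'| = R. Then the redundancy of the composite run-length-limited code satisfies red(RLL_{Q,R}(ℓ,n)) ≥ log_Q(e) · (R/Q)^ℓ · (1 − R/Q) · (n − 2ℓ)/2. -/

import Mathlib

open Finset Real

/-- A sequence `x ∈ Σⁿ` is `ℓ`-run-length-limited if every window of `ℓ`
consecutive symbols contains at least one symbol outside `S'`. -/
def IsRLL {σ : Type*} (S' : Finset σ) (ℓ : ℕ) {n : ℕ} (x : Fin n → σ) : Prop :=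
  ∀ i : ℕ, (h : i + ℓ ≤ n) → ∃ k : ℕ, ∃ hk : k < ℓ, x ⟨i + k, by omega⟩ ∉ S'

lemma IsRLL.window {σ : Type*} {S' : Finset σ} {ℓ n : ℕ} {x : Fin n → σ}
    (hx : IsRLL S' ℓ x) (c m : ℕ) (hcm : c + m ≤ n) :
    IsRLL S' ℓ (fun t : Fin m => x ⟨c + t.val, by omega⟩) := by
  intro i hi
  obtain ⟨k, hk, hmem⟩ := hx (c + i) (by omega)
  refine ⟨k, hk, ?_⟩
  have he : (⟨c + ((⟨i + k, by omega⟩ : Fin m) : ℕ), by omega⟩ : Fin n)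
      = ⟨c + i + k, by omega⟩ := by
    apply Fin.ext; simp; omega
  simpa [he] using hmem

section Block
variable {σ : Type*} [Fintype σ] [DecidableEq σ] (S' : Finset σ) (ℓ : ℕ)

def rllF (i t : ℕ) : Finset σ :=
  if i ≤ t ∧ t < i + ℓ then S' else if t = i + ℓ then S'ᶜ else Finset.univ

def rllE (i : ℕ) : Finset (Fin (2*ℓ) → σ) :=
  Fintype.piFinset (fun t => rllF S' ℓ i t.val)

lemma card_rllE {Q R : ℕ} (hσ : Fintype.card σ = Q) (hS' : S'.card = R)
    {i : ℕ} (hi : i < ℓ) :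
    (rllE S' ℓ i).card = R ^ ℓ * (Q - R) * Q ^ (ℓ - 1) := by
  have hcard : ∀ t : ℕ, (rllF S' ℓ i t).card =
      if i ≤ t ∧ t < i + ℓ then R else if t = i + ℓ then Q - R else Q := by
    intro t
    unfold rllF
    split_ifs with h1 h2
    · exact hS'
    · rw [Finset.card_compl, hσ, hS']
    · rw [Finset.card_univ, hσ]
  rw [rllE, Fintype.card_piFinset]
  rw [Fin.prod_univ_eq_prod_range (fun t => (rllF S' ℓ i t).card) (2*ℓ)]
  simp only [hcard]
  set g : ℕ → ℕ := fun t => if i ≤ t ∧ t < i + ℓ then R else if t = i + ℓ then Q - R else Q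
    with hg
  have h1 : ∏ t ∈ Finset.Ico 0 i, g t = Q ^ i := by
    rw [Finset.prod_congr rfl (fun t ht => ?_), Finset.prod_const, Nat.card_Ico, Nat.sub_zero]
    simp only [Finset.mem_Ico] at ht
    simp only [hg]; rw [if_neg (by omega), if_neg (by omega)]
  have h2 : ∏ t ∈ Finset.Ico i (i+ℓ), g t = R ^ ℓ := by
    rw [Finset.prod_congr rfl (fun t ht => ?_), Finset.prod_const, Nat.card_Ico,
      Nat.add_sub_cancel_left]
    simp only [Finset.mem_Ico] at ht
    simp only [hg]; rw [if_pos (by omega)]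
  have h3 : ∏ t ∈ Finset.Ico (i+ℓ) (i+ℓ+1), g t = Q - R := by
    have hc : ∀ t ∈ Finset.Ico (i+ℓ) (i+ℓ+1), g t = Q - R := by
      intro t ht; simp only [Finset.mem_Ico] at ht
      simp only [hg]; rw [if_neg (by omega), if_pos (by omega)]
    rw [Finset.prod_congr rfl hc, Finset.prod_const, Nat.card_Ico]
    simp
  have h4 : ∏ t ∈ Finset.Ico (i+ℓ+1) (2*ℓ), g t = Q ^ (ℓ - i - 1) := by
    have hc : ∀ t ∈ Finset.Ico (i+ℓ+1) (2*ℓ), g t = Q := by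
      intro t ht; simp only [Finset.mem_Ico] at ht
      simp only [hg]; rw [if_neg (by omega), if_neg (by omega)]
    rw [Finset.prod_congr rfl hc, Finset.prod_const, Nat.card_Ico]
    congr 1; omega
  have e1 : (∏ t ∈ Finset.Ico 0 i, g t) * (∏ t ∈ Finset.Ico i (i+ℓ), g t)
      = ∏ t ∈ Finset.Ico 0 (i+ℓ), g t :=
    Finset.prod_Ico_consecutive g (by omega) (by omega)
  have e2 : (∏ t ∈ Finset.Ico 0 (i+ℓ), g t) * (∏ t ∈ Finset.Ico (i+ℓ) (i+ℓ+1), g t)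
      = ∏ t ∈ Finset.Ico 0 (i+ℓ+1), g t :=
    Finset.prod_Ico_consecutive g (by omega) (by omega)
  have e3 : (∏ t ∈ Finset.Ico 0 (i+ℓ+1), g t) * (∏ t ∈ Finset.Ico (i+ℓ+1) (2*ℓ), g t)
      = ∏ t ∈ Finset.Ico 0 (2*ℓ), g t :=
    Finset.prod_Ico_consecutive g (by omega) (by omega)
  have key : ∏ t ∈ Finset.range (2*ℓ), g t = Q ^ i * R ^ ℓ * (Q - R) * Q ^ (ℓ - i - 1) := by
    rw [Finset.range_eq_Ico, ← e3, ← e2, ← e1, h1, h2, h3, h4]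
  rw [key]
  have hqq : Q ^ i * Q ^ (ℓ - i - 1) = Q ^ (ℓ - 1) := by
    rw [← pow_add]; congr 1; omega
  calc Q ^ i * R ^ ℓ * (Q - R) * Q ^ (ℓ - i - 1)
      = R ^ ℓ * (Q - R) * (Q ^ i * Q ^ (ℓ - i - 1)) := by ring
    _ = R ^ ℓ * (Q - R) * Q ^ (ℓ - 1) := by rw [hqq]

end Block

section Block2
variable {σ : Type*} [Fintype σ] [DecidableEq σ] {S' : Finset σ} {ℓ : ℕ}

lemma not_isRLL_of_mem_rllE (hℓ : 1 ≤ ℓ) {i : ℕ} (hi : i < ℓ) {x : Fin (2*ℓ) → σ}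
    (hx : x ∈ rllE S' ℓ i) : ¬ IsRLL S' ℓ x := by
  rw [rllE, Fintype.mem_piFinset] at hx
  intro hrll
  obtain ⟨k, hk, hmem⟩ := hrll i (by omega)
  have := hx ⟨i + k, by omega⟩
  rw [rllF, if_pos (by simp; omega)] at this
  exact hmem this

lemma rllE_disjoint (hℓ : 1 ≤ ℓ) {i j : ℕ} (hi : i < ℓ) (hj : j < ℓ) (hij : i < j) :
    Disjoint (rllE S' ℓ i) (rllE S' ℓ j) := by
  rw [Finset.disjoint_left]
  intro x hxi hxj
  rw [rllE, Fintype.mem_piFinset] at hxi hxj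
  have h1 := hxi ⟨i + ℓ, by omega⟩
  have h2 := hxj ⟨i + ℓ, by omega⟩
  rw [rllF] at h1 h2
  rw [if_neg (by simp), if_pos (by simp)] at h1
  rw [if_pos (by simp; omega)] at h2
  simp only [Finset.mem_compl] at h1
  exact h1 h2

lemma card_block {Q R : ℕ} (hR : 1 ≤ R) (hQR : R < Q) (hℓ : 1 ≤ ℓ)
    (hσ : Fintype.card σ = Q) (hS' : S'.card = R)
    [DecidablePred fun x : Fin (2*ℓ) → σ => IsRLL S' ℓ x] :
    (Finset.univ.filter fun x : Fin (2*ℓ) → σ => IsRLL S' ℓ x).card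
      + ℓ * (R ^ ℓ * (Q - R) * Q ^ (ℓ - 1)) ≤ Q ^ (2*ℓ) := by
  classical
  set A := Finset.univ.filter fun x : Fin (2*ℓ) → σ => IsRLL S' ℓ x with hA
  set U := (Finset.range ℓ).biUnion (rllE S' ℓ) with hU
  have hpw : ∀ i ∈ Finset.range ℓ, ∀ j ∈ Finset.range ℓ, i ≠ j →
      Disjoint (rllE S' ℓ i) (rllE S' ℓ j) := by
    intro i hi j hj hij
    simp only [Finset.mem_range] at hi hj
    rcases lt_or_gt_of_ne hij with h | h
    · exact rllE_disjoint hℓ hi hj h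
    · exact (rllE_disjoint hℓ hj hi h).symm
  have hcardU : U.card = ℓ * (R ^ ℓ * (Q - R) * Q ^ (ℓ - 1)) := by
    rw [hU, Finset.card_biUnion hpw]
    rw [Finset.sum_congr rfl (fun i hi => card_rllE S' ℓ hσ hS' (Finset.mem_range.mp hi))]
    rw [Finset.sum_const, Finset.card_range, smul_eq_mul]
  have hdisj : Disjoint A U := by
    rw [Finset.disjoint_left]
    intro x hxA hxU
    rw [hU, Finset.mem_biUnion] at hxU
    obtain ⟨i, hi, hxi⟩ := hxU
    rw [hA, Finset.mem_filter] at hxA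
    exact not_isRLL_of_mem_rllE hℓ (Finset.mem_range.mp hi) hxi hxA.2
  calc A.card + ℓ * (R ^ ℓ * (Q - R) * Q ^ (ℓ - 1)) = A.card + U.card := by rw [hcardU]
    _ = (A ∪ U).card := (Finset.card_union_of_disjoint hdisj).symm
    _ ≤ Finset.univ.card := Finset.card_le_univ _
    _ = Q ^ (2*ℓ) := by
        rw [Finset.card_univ, Fintype.card_fun, hσ, Fintype.card_fin]

end Block2

lemma card_rll_split {σ : Type*} [Fintype σ] [DecidableEq σ] (S' : Finset σ) (ℓ n : ℕ)
    (hℓ : 1 ≤ ℓ)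
    [DecidablePred fun x : Fin n → σ => IsRLL S' ℓ x]
    [DecidablePred fun x : Fin (2*ℓ) → σ => IsRLL S' ℓ x] :
    (Finset.univ.filter fun x : Fin n → σ => IsRLL S' ℓ x).card ≤
      (Finset.univ.filter fun x : Fin (2*ℓ) → σ => IsRLL S' ℓ x).card ^ (n / (2*ℓ))
        * (Fintype.card σ) ^ (n % (2*ℓ)) := by
  set k := n / (2*ℓ) with hkdef
  set r := n % (2*ℓ) with hrdef
  have hkr : 2*ℓ*k + r = n := by rw [hkdef, hrdef]; exact Nat.div_add_mod n (2*ℓ)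
  have hmul : ∀ (j : Fin k) (t : Fin (2*ℓ)), 2*ℓ*j.val + t.val < n := by
    intro j t
    have h1 : 2*ℓ*(j.val+1) ≤ 2*ℓ*k := Nat.mul_le_mul_left _ j.isLt
    have h2 := t.isLt
    have h3 : 2*ℓ*(j.val+1) = 2*ℓ*j.val + 2*ℓ := by ring
    omega
  have hwin : ∀ (j : Fin k), 2*ℓ*j.val + 2*ℓ ≤ n := by
    intro j
    have h1 : 2*ℓ*(j.val+1) ≤ 2*ℓ*k := Nat.mul_le_mul_left _ j.isLt
    have h3 : 2*ℓ*(j.val+1) = 2*ℓ*j.val + 2*ℓ := by ring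
    omega
  have htail : ∀ (t : Fin r), 2*ℓ*k + t.val < n := fun t => by
    have := t.isLt; omega
  let f : {x : Fin n → σ // IsRLL S' ℓ x} →
      (Fin k → {y : Fin (2*ℓ) → σ // IsRLL S' ℓ y}) × (Fin r → σ) :=
    fun x => (fun j => ⟨fun t => x.1 ⟨2*ℓ*j.val + t.val, hmul j t⟩,
        x.2.window (2*ℓ*j.val) (2*ℓ) (hwin j)⟩,
      fun t => x.1 ⟨2*ℓ*k + t.val, htail t⟩)
  have hinj : Function.Injective f := by
    intro x y hxy
    have h1 := congrArg Prod.fst hxy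
    have h2 := congrArg Prod.snd hxy
    simp only [f] at h1 h2
    apply Subtype.ext
    funext v
    by_cases hv : v.val < 2*ℓ*k
    · have hj : v.val / (2*ℓ) < k := by
        rw [Nat.div_lt_iff_lt_mul (by omega), Nat.mul_comm]; exact hv
      have e1 := congrFun h1 ⟨v.val / (2*ℓ), hj⟩
      have e2 := congrArg Subtype.val e1
      have e3 := congrFun e2 ⟨v.val % (2*ℓ), Nat.mod_lt _ (by omega)⟩
      simp only at e3
      have hidx : (⟨2*ℓ*(v.val / (2*ℓ)) + v.val % (2*ℓ),
          hmul ⟨v.val / (2*ℓ), hj⟩ ⟨v.val % (2*ℓ), Nat.mod_lt _ (by omega)⟩⟩ : Fin n) = v := by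
        apply Fin.ext; simp [Nat.div_add_mod]
      rwa [hidx] at e3
    · have ht : v.val - 2*ℓ*k < r := by have := v.isLt; omega
      have e3 := congrFun h2 ⟨v.val - 2*ℓ*k, ht⟩
      simp only at e3
      have hidx : (⟨2*ℓ*k + (v.val - 2*ℓ*k), htail ⟨v.val - 2*ℓ*k, ht⟩⟩ : Fin n) = v := by
        apply Fin.ext; simp; omega
      rwa [hidx] at e3
  calc (Finset.univ.filter fun x : Fin n → σ => IsRLL S' ℓ x).card
      = Fintype.card {x : Fin n → σ // IsRLL S' ℓ x} := (Fintype.card_subtype _).symm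
    _ ≤ Fintype.card ((Fin k → {y : Fin (2*ℓ) → σ // IsRLL S' ℓ y}) × (Fin r → σ)) :=
        Fintype.card_le_of_injective f hinj
    _ = (Finset.univ.filter fun x : Fin (2*ℓ) → σ => IsRLL S' ℓ x).card ^ k
        * (Fintype.card σ) ^ r := by
        rw [Fintype.card_prod, Fintype.card_fun, Fintype.card_fun, Fintype.card_fin,
          Fintype.card_fin, Fintype.card_subtype]

/-- Lower bound on the redundancy of composite RLL codes. -/
theorem rll_redundancy_lower_bound {σ : Type*} [Fintype σ] (Q R ℓ n : ℕ)
    (hR : 1 ≤ R) (hQR : R < Q) (hℓ : 1 ≤ ℓ) (hn : 2 * ℓ ≤ n)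
    (hσ : Fintype.card σ = Q) (S' : Finset σ) (hS' : S'.card = R) :
    (n : ℝ) - Real.logb Q ({x : Fin n → σ | IsRLL S' ℓ x}.ncard) ≥
      Real.logb Q (Real.exp 1) * ((R : ℝ) / Q) ^ ℓ * (1 - (R : ℝ) / Q) *
        (((n : ℝ) - 2 * ℓ) / 2) := by
  classical
  obtain ⟨a, ha⟩ : ∃ a : σ, a ∉ S' := by
    by_contra hcon; push_neg at hcon
    have h2 : (Finset.univ : Finset σ) ⊆ S' := fun b _ => hcon b
    have h3 := Finset.card_le_card h2
    rw [Finset.card_univ, hσ, hS'] at h3; omega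
  have hconst : ∀ m : ℕ, IsRLL S' ℓ (fun _ : Fin m => a) := fun m i hi => ⟨0, by omega, ha⟩
  set k := n / (2*ℓ) with hkdef
  set r := n % (2*ℓ) with hrdef
  have hkr : 2*ℓ*k + r = n := by rw [hkdef, hrdef]; exact Nat.div_add_mod n (2*ℓ)
  have hrlt : r < 2*ℓ := Nat.mod_lt _ (by omega)
  set N2 : ℕ := (Finset.univ.filter fun x : Fin (2*ℓ) → σ => IsRLL S' ℓ x).card with hN2def
  set Nn : ℕ := (Finset.univ.filter fun x : Fin n → σ => IsRLL S' ℓ x).card with hNndef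
  have hset : ({x : Fin n → σ | IsRLL S' ℓ x}.ncard) = Nn := by
    rw [Set.ncard_eq_toFinset_card', Set.toFinset_setOf]
  rw [hset]
  have hN2pos : 0 < N2 :=
    Finset.card_pos.mpr ⟨fun _ => a, Finset.mem_filter.mpr ⟨Finset.mem_univ _, hconst _⟩⟩
  have hNnpos : 0 < Nn :=
    Finset.card_pos.mpr ⟨fun _ => a, Finset.mem_filter.mpr ⟨Finset.mem_univ _, hconst _⟩⟩
  have hsplit : Nn ≤ N2 ^ k * Q ^ r := by
    have h := card_rll_split S' ℓ n hℓ
    rwa [hσ] at h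
  have hblock : N2 + ℓ * (R ^ ℓ * (Q - R) * Q ^ (ℓ - 1)) ≤ Q ^ (2*ℓ) :=
    card_block hR hQR hℓ hσ hS'
  -- real analysis
  set p : ℝ := (R:ℝ)/Q with hpdef
  set L : ℝ := Real.log Q with hLdef
  have hQ1 : (1:ℝ) < Q := by exact_mod_cast (by omega : 1 < Q)
  have hQ0 : (0:ℝ) < Q := by linarith
  have hL : 0 < L := Real.log_pos hQ1
  have hp0 : 0 ≤ p := by positivity
  have hp1 : p ≤ 1 := by
    rw [hpdef, div_le_one hQ0]; exact_mod_cast hQR.le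
  set xx : ℝ := (ℓ:ℝ) * (p^ℓ * (1-p)) with hxxdef
  have hc : ((ℓ * (R ^ ℓ * (Q - R) * Q ^ (ℓ - 1)) : ℕ) : ℝ) = (Q:ℝ)^(2*ℓ) * xx := by
    obtain ⟨m, hm⟩ : ∃ m, ℓ = m + 1 := ⟨ℓ - 1, by omega⟩
    rw [hxxdef, hpdef, hm]
    push_cast [Nat.cast_sub hQR.le]
    field_simp
    rw [div_pow]
    field_simp
    ring
  have hN2le : (N2 : ℝ) ≤ (Q:ℝ)^(2*ℓ) * (1 - xx) := by
    have h1 : (N2:ℝ) + (Q:ℝ)^(2*ℓ) * xx ≤ (Q:ℝ)^(2*ℓ) := by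
      rw [← hc]
      exact_mod_cast hblock
    linarith
  have h1x : 0 < 1 - xx := by
    have h2 : (1:ℝ) ≤ (N2:ℝ) := by exact_mod_cast hN2pos
    nlinarith [pow_pos hQ0 (2*ℓ)]
  have hlogN2 : Real.log N2 ≤ 2*ℓ*L - xx := by
    calc Real.log N2 ≤ Real.log ((Q:ℝ)^(2*ℓ) * (1 - xx)) :=
          Real.log_le_log (by exact_mod_cast hN2pos) hN2le
      _ = 2*ℓ*L + Real.log (1 - xx) := by
          rw [Real.log_mul (by positivity) (by linarith), Real.log_pow]
          push_cast [hLdef]; ring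
      _ ≤ 2*ℓ*L - xx := by
          have := Real.log_le_sub_one_of_pos h1x
          linarith
  have hlogNn : Real.log Nn ≤ k*(2*ℓ*L) + r*L - k*xx := by
    calc Real.log Nn ≤ Real.log ((N2:ℝ)^k * (Q:ℝ)^r) := by
          apply Real.log_le_log (by exact_mod_cast hNnpos)
          exact_mod_cast hsplit
      _ = k * Real.log N2 + r * L := by
          rw [Real.log_mul (by positivity) (by positivity), Real.log_pow, Real.log_pow, hLdef]
      _ ≤ k*(2*ℓ*L) + r*L - k*xx := by
          have hk0 : (0:ℝ) ≤ k := by positivity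
          have h5 := mul_le_mul_of_nonneg_left hlogN2 hk0
          have h6 : (k:ℝ)*(2*ℓ*L - xx) = k*(2*ℓ*L) - k*xx := by ring
          linarith [h5, h6]
  have hnr : (n:ℝ) = 2*ℓ*k + r := by exact_mod_cast hkr.symm
  have hbig : p^ℓ * (1-p) * (((n:ℝ) - 2*ℓ)/2) ≤ (n:ℝ)*L - Real.log Nn := by
    have hB : 0 ≤ p^ℓ*(1-p) := mul_nonneg (pow_nonneg hp0 _) (by linarith)
    have hstep : ((n:ℝ) - 2*ℓ)/2 ≤ (k:ℝ)*ℓ := by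
      rw [div_le_iff₀ (by norm_num : (0:ℝ) < 2)]
      have hr2 : (r:ℝ) ≤ 2*ℓ := by exact_mod_cast hrlt.le
      have h7 : (2:ℝ)*ℓ*k = (k:ℝ)*ℓ*2 := by ring
      linarith [hnr, hr2, h7]
    have h2 : p^ℓ*(1-p) * (((n:ℝ)-2*ℓ)/2) ≤ p^ℓ*(1-p) * ((k:ℝ)*ℓ) :=
      mul_le_mul_of_nonneg_left hstep hB
    have h3 : p^ℓ*(1-p) * ((k:ℝ)*ℓ) = (k:ℝ)*xx := by rw [hxxdef]; ring
    have h4 : (n:ℝ)*L = k*(2*ℓ*L) + r*L := by rw [hnr]; ring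
    linarith [hlogNn]
  have hlogb1 : Real.logb Q (Real.exp 1) = 1/L := by
    rw [Real.logb, Real.log_exp, hLdef]
  have hlogb2 : Real.logb Q (Nn:ℝ) = Real.log Nn / L := by rw [Real.logb, hLdef]
  rw [hlogb1, hlogb2, ge_iff_le]
  calc 1/L * p^ℓ * (1-p) * (((n:ℝ) - 2*ℓ)/2)
      = (p^ℓ * (1-p) * (((n:ℝ)-2*ℓ)/2)) / L := by ring
    _ ≤ ((n:ℝ)*L - Real.log Nn)/L := (div_le_div_iff_of_pos_right hL).mpr hbig
    _ = (n:ℝ) - Real.log Nn / L := by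
        rw [sub_div, mul_div_cancel_right₀ _ hL.ne']
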